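/- Fix distinct positive real numbers x and y. Then the function p ↦ J_p(x,y) is strictly increasing on ℝ ∖ {0, −1}; that is, for all p, q ∈ ℝ ∖ {0, −1} with p < q, J_p(x,y) < J_q(x,y). -/

import Mathlib

/-- The Alzer mean `J_p(a,b) = (p/(p+1)) * (a^(p+1) - b^(p+1))/(a^p - b^p)`
of distinct positive reals `a`, `b`, for `p ∉ {0, -1}`. -/
noncomputable def alzer (p a b : ℝ) : ℝ :=
  (p / (p + 1)) * ((a ^ (p + 1) - b ^ (p + 1)) / (a ^ p - b ^ p))

open intervalIntegral MeasureTheory Set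

/-- Integrability of `t ^ r` on an interval with positive endpoints. -/
lemma alzer_aux_intble {c d : ℝ} (hc : 0 < c) (hd : 0 < d) (r : ℝ) :
    IntervalIntegrable (fun t : ℝ => t ^ r) volume c d := by
  apply ContinuousOn.intervalIntegrable
  apply ContinuousOn.rpow_const continuousOn_id
  intro t ht
  left
  have : 0 < min c d := lt_min hc hd
  exact ne_of_gt (lt_of_lt_of_le this ht.1)

/-- Positivity of `∫ t^r` on a nondegenerate interval with positive endpoints. -/
lemma alzer_aux_intpos {c d : ℝ} (hc : 0 < c) (hcd : c < d) (r : ℝ) :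
    0 < ∫ t in c..d, t ^ r := by
  refine intervalIntegral_pos_of_pos_on (alzer_aux_intble hc (hc.trans hcd) r) ?_ hcd
  intro t ht
  exact Real.rpow_pos_of_pos (hc.trans ht.1) r

/-- A splitting of `s ^ q` for positive base. -/
lemma alzer_aux_split {s : ℝ} (hs : 0 < s) (p q : ℝ) :
    s ^ q = s ^ (p - 1) * s ^ (q - p) * s := by
  conv_lhs => rw [show q = (p - 1) + (q - p) + 1 by ring]
  rw [Real.rpow_add hs, Real.rpow_add hs, Real.rpow_one]

/-- The pointwise kernel identity. -/
lemma alzer_aux_kernel {s t : ℝ} (hs : 0 < s) (ht : 0 < t) (p q : ℝ) :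
    s ^ q * t ^ (p - 1) + s ^ (p - 1) * t ^ q -
      (s ^ p * t ^ (q - 1) + s ^ (q - 1) * t ^ p) =
    s ^ (p - 1) * t ^ (p - 1) * ((s ^ (q - p) - t ^ (q - p)) * (s - t)) := by
  have h1 := alzer_aux_split hs p q
  have h2 := alzer_aux_split ht p q
  have h3 : s ^ p = s ^ (p - 1) * s := by
    conv_lhs => rw [show p = (p - 1) + 1 by ring]
    rw [Real.rpow_add hs, Real.rpow_one]
  have h4 : t ^ p = t ^ (p - 1) * t := by
    conv_lhs => rw [show p = (p - 1) + 1 by ring]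
    rw [Real.rpow_add ht, Real.rpow_one]
  have h5 : s ^ (q - 1) = s ^ (p - 1) * s ^ (q - p) := by
    conv_lhs => rw [show q - 1 = (p - 1) + (q - p) by ring]
    rw [Real.rpow_add hs]
  have h6 : t ^ (q - 1) = t ^ (p - 1) * t ^ (q - p) := by
    conv_lhs => rw [show q - 1 = (p - 1) + (q - p) by ring]
    rw [Real.rpow_add ht]
  rw [h1, h2, h3, h4, h5, h6]; ring

/-- Positivity of the kernel off the diagonal. -/
lemma alzer_aux_kernel_pos {s t : ℝ} (hs : 0 < s) (ht : 0 < t) (hst : s ≠ t)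
    {p q : ℝ} (hpq : p < q) :
    0 < s ^ q * t ^ (p - 1) + s ^ (p - 1) * t ^ q -
      (s ^ p * t ^ (q - 1) + s ^ (q - 1) * t ^ p) := by
  rw [alzer_aux_kernel hs ht p q]
  apply mul_pos (mul_pos (Real.rpow_pos_of_pos hs _) (Real.rpow_pos_of_pos ht _))
  rcases hst.lt_or_gt with h | h
  · have := Real.rpow_lt_rpow hs.le h (sub_pos.2 hpq)
    exact mul_pos_of_neg_of_neg (sub_neg.2 this) (sub_neg.2 h)
  · have := Real.rpow_lt_rpow ht.le h (sub_pos.2 hpq)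
    exact mul_pos (sub_pos.2 this) (sub_pos.2 h)

/-- The key integral inequality. -/
lemma alzer_aux_key_int {a b p q : ℝ} (hb : 0 < b) (hba : b < a) (hpq : p < q) :
    (∫ t in b..a, t ^ p) * (∫ t in b..a, t ^ (q - 1)) <
      (∫ t in b..a, t ^ q) * (∫ t in b..a, t ^ (p - 1)) := by
  have ha : 0 < a := hb.trans hba
  set I : ℝ → ℝ := fun r => ∫ t in b..a, t ^ r with hI
  -- the slice function
  set H : ℝ → ℝ := fun s =>
    s ^ q * I (p - 1) + s ^ (p - 1) * I q - (s ^ p * I (q - 1) + s ^ (q - 1) * I p)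
    with hH
  -- H s is an integral of the kernel
  have hslice : ∀ s : ℝ, 0 < s → H s =
      ∫ t in b..a, (s ^ q * t ^ (p - 1) + s ^ (p - 1) * t ^ q -
        (s ^ p * t ^ (q - 1) + s ^ (q - 1) * t ^ p)) := by
    intro s hs
    rw [integral_sub ((((alzer_aux_intble hb ha (p-1)).const_mul _).add
          ((alzer_aux_intble hb ha q).const_mul _)))
        ((((alzer_aux_intble hb ha (q-1)).const_mul _).add
          ((alzer_aux_intble hb ha p).const_mul _))),
      integral_add ((alzer_aux_intble hb ha (p-1)).const_mul _)
        ((alzer_aux_intble hb ha q).const_mul _),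
      integral_add ((alzer_aux_intble hb ha (q-1)).const_mul _)
        ((alzer_aux_intble hb ha p).const_mul _),
      intervalIntegral.integral_const_mul, intervalIntegral.integral_const_mul, intervalIntegral.integral_const_mul, intervalIntegral.integral_const_mul]
  -- H is positive on the open interval
  have hHpos : ∀ s ∈ Ioo b a, 0 < H s := by
    intro s hsm
    have hs : 0 < s := hb.trans hsm.1
    rw [hslice s hs]
    have hsplit := integral_add_adjacent_intervals
      (a := b) (b := s) (c := a) (f := fun t =>
        s ^ q * t ^ (p - 1) + s ^ (p - 1) * t ^ q -
          (s ^ p * t ^ (q - 1) + s ^ (q - 1) * t ^ p))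
      ((((alzer_aux_intble hb hs (p-1)).const_mul _).add
          ((alzer_aux_intble hb hs q).const_mul _)).sub
        (((alzer_aux_intble hb hs (q-1)).const_mul _).add
          ((alzer_aux_intble hb hs p).const_mul _)))
      ((((alzer_aux_intble hs ha (p-1)).const_mul _).add
          ((alzer_aux_intble hs ha q).const_mul _)).sub
        (((alzer_aux_intble hs ha (q-1)).const_mul _).add
          ((alzer_aux_intble hs ha p).const_mul _)))
    rw [← hsplit]
    have h1 : 0 < ∫ t in b..s, (s ^ q * t ^ (p - 1) + s ^ (p - 1) * t ^ q -
        (s ^ p * t ^ (q - 1) + s ^ (q - 1) * t ^ p)) := by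
      refine intervalIntegral_pos_of_pos_on
        ((((alzer_aux_intble hb hs (p-1)).const_mul _).add
            ((alzer_aux_intble hb hs q).const_mul _)).sub
          (((alzer_aux_intble hb hs (q-1)).const_mul _).add
            ((alzer_aux_intble hb hs p).const_mul _))) ?_ hsm.1
      intro t htm
      exact alzer_aux_kernel_pos hs (hb.trans htm.1) (ne_of_gt htm.2) hpq
    have h2 : 0 < ∫ t in s..a, (s ^ q * t ^ (p - 1) + s ^ (p - 1) * t ^ q -
        (s ^ p * t ^ (q - 1) + s ^ (q - 1) * t ^ p)) := by
      refine intervalIntegral_pos_of_pos_on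
        ((((alzer_aux_intble hs ha (p-1)).const_mul _).add
            ((alzer_aux_intble hs ha q).const_mul _)).sub
          (((alzer_aux_intble hs ha (q-1)).const_mul _).add
            ((alzer_aux_intble hs ha p).const_mul _))) ?_ hsm.2
      intro t htm
      exact alzer_aux_kernel_pos hs (hs.trans htm.1) (ne_of_lt htm.1) hpq
    linarith
  -- integrate H
  have hHint : (∫ s in b..a, H s) =
      I q * I (p - 1) + I (p - 1) * I q - (I p * I (q - 1) + I (q - 1) * I p) := by
    rw [hH]
    rw [integral_sub ((((alzer_aux_intble hb ha q).mul_const _).add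
          ((alzer_aux_intble hb ha (p-1)).mul_const _)))
        ((((alzer_aux_intble hb ha p).mul_const _).add
          ((alzer_aux_intble hb ha (q-1)).mul_const _))),
      integral_add ((alzer_aux_intble hb ha q).mul_const _)
        ((alzer_aux_intble hb ha (p-1)).mul_const _),
      integral_add ((alzer_aux_intble hb ha p).mul_const _)
        ((alzer_aux_intble hb ha (q-1)).mul_const _),
      intervalIntegral.integral_mul_const, intervalIntegral.integral_mul_const, intervalIntegral.integral_mul_const, intervalIntegral.integral_mul_const]
  have hHpos' : 0 < ∫ s in b..a, H s := by
    refine intervalIntegral_pos_of_pos_on ?_ hHpos hba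
    exact ((((alzer_aux_intble hb ha q).mul_const _).add
          ((alzer_aux_intble hb ha (p-1)).mul_const _)).sub
        (((alzer_aux_intble hb ha p).mul_const _).add
          ((alzer_aux_intble hb ha (q-1)).mul_const _)))
  rw [hHint] at hHpos'
  simp only [hI] at hHpos' ⊢
  nlinarith [hHpos']

/-- `alzer` as a ratio of integrals. -/
lemma alzer_aux_eq {a b p : ℝ} (hb : 0 < b) (hba : b < a) (hp0 : p ≠ 0) (hp1 : p ≠ -1) :
    alzer p a b = (∫ t in b..a, t ^ p) / (∫ t in b..a, t ^ (p - 1)) := by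
  have ha : 0 < a := hb.trans hba
  have h0 : (0 : ℝ) ∉ Set.uIcc b a := Set.notMem_uIcc_of_lt hb ha
  rw [integral_rpow (Or.inr ⟨hp1, h0⟩),
    integral_rpow (Or.inr ⟨by intro h; exact hp0 (by linarith [sub_eq_iff_eq_add.mp h]), h0⟩)]
  rw [show p - 1 + 1 = p by ring]
  have hab : a ^ p ≠ b ^ p := by
    rcases hp0.lt_or_gt with h | h
    · exact ne_of_lt (Real.rpow_lt_rpow_of_neg hb hba h)
    · exact ne_of_gt (Real.rpow_lt_rpow hb.le hba h)
  have hp1' : p + 1 ≠ 0 := by intro h; exact hp1 (by linarith)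
  have hab' : a ^ p - b ^ p ≠ 0 := sub_ne_zero.2 hab
  unfold alzer
  field_simp

lemma alzer_symm (p x y : ℝ) : alzer p x y = alzer p y x := by
  unfold alzer
  rw [show x ^ (p + 1) - y ^ (p + 1) = -(y ^ (p + 1) - x ^ (p + 1)) by ring,
    show x ^ p - y ^ p = -(y ^ p - x ^ p) by ring, neg_div_neg_eq]

/-- The main comparison for ordered arguments. -/
lemma alzer_aux_main {a b : ℝ} (hb : 0 < b) (hba : b < a) {p q : ℝ}
    (hp0 : p ≠ 0) (hp1 : p ≠ -1) (hq0 : q ≠ 0) (hq1 : q ≠ -1) (hpq : p < q) :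
    alzer p a b < alzer q a b := by
  have ha : 0 < a := hb.trans hba
  rw [alzer_aux_eq hb hba hp0 hp1, alzer_aux_eq hb hba hq0 hq1]
  rw [div_lt_div_iff₀ (alzer_aux_intpos hb hba (p - 1)) (alzer_aux_intpos hb hba (q - 1))]
  exact alzer_aux_key_int hb hba hpq

/-- For fixed distinct positive reals `x`, `y`, the map `p ↦ J_p(x,y)` is
strictly increasing on `ℝ \ {0, -1}`. -/
theorem alzer_strictMono_in_p (x y : ℝ) (hx : 0 < x) (hy : 0 < y) (hxy : x ≠ y) :
    ∀ p q : ℝ, p ≠ 0 → p ≠ -1 → q ≠ 0 → q ≠ -1 → p < q →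
      alzer p x y < alzer q x y := by
  intro p q hp0 hp1 hq0 hq1 hpq
  rcases hxy.lt_or_gt with h | h
  · rw [alzer_symm p, alzer_symm q]
    exact alzer_aux_main hx h hp0 hp1 hq0 hq1 hpq
  · exact alzer_aux_main hy h hp0 hp1 hq0 hq1 hpq
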